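/- Every compact operator $Z$ on the Hilbert space $\mathcal{H}^2 = \bigoplus_{l\in I} H^2[-\pi,\pi]$ (with $I=(0,1]\cap\mathbb{Q}$) is zero-distributed: $\lim_{n\to\infty} \frac{1}{n}\sum_{e_{lk}\in B_n} \|Z(e_{lk})\|^2 = 0$, where $B_n = \{e_{lk} : k = 0,\dots,\lfloor n/\lfloor\sqrt{n}\rfloor\rfloor - 1,\ l \in I_{\lfloor\sqrt{n}\rfloor}\}$ and $I_m = \{j/m : j=1,\dots,m\}$. -/

import Mathlib

open Filter Finset MeasureTheory
open scoped ENNReal InnerProductSpace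

noncomputable section

/-- The index set `I = (0,1] ∩ ℚ`. -/
abbrev Iq : Type := {q : ℚ // 0 < q ∧ q ≤ 1}

/-- The Hilbert space `ℋ² = ⊕_{l ∈ I} H²[-π,π]`, realized via the orthonormal basis
`{e_{lk} : l ∈ I, k ∈ ℕ}` as `ℓ²(I × ℕ)`. -/
abbrev H2 : Type := lp (fun _ : Iq × ℕ => ℂ) 2

def eb (i : Iq × ℕ) : H2 := lp.single 2 i (1 : ℂ)

lemma eb_norm (i : Iq × ℕ) : ‖eb i‖ = 1 := by
  have := lp.norm_single (p := 2) (E := fun _ : Iq × ℕ => ℂ) (by norm_num)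
    i (1 : ℂ)
  simpa [eb] using this

lemma eb_orthonormal : Orthonormal ℂ eb := by
  classical
  rw [orthonormal_iff_ite]
  intro i j
  rw [eb, eb, lp.inner_single_left]
  simp [lp.single_apply, Pi.single_apply, eq_comm]

lemma key_tendsto (Z : H2 →L[ℂ] H2) (hZ : IsCompactOperator ⇑Z) :
    Tendsto (fun i : Iq × ℕ => ‖Z (eb i)‖) cofinite (nhds 0) := by
  rw [Metric.tendsto_nhds]
  intro ε hε
  rw [Filter.eventually_cofinite]
  by_contra hinf
  have hinf' : {i : Iq × ℕ | ε ≤ ‖Z (eb i)‖}.Infinite := by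
    refine Set.Infinite.mono (fun i hi => ?_) hinf
    simp only [Set.mem_setOf_eq, Real.dist_eq, sub_zero, not_lt] at hi
    exact le_trans hi (le_of_eq (abs_of_nonneg (norm_nonneg _)))
  have hZ' : IsCompactOperator ⇑(Z.toLinearMap) := hZ
  obtain ⟨K, hK, hKsub⟩ := hZ'.image_closedBall_subset_compact 1
  set g := hinf'.natEmbedding
  set u : ℕ → H2 := fun n => Z (eb (g n)) with hu
  have hmem : ∀ n, u n ∈ K := by
    intro n
    apply hKsub
    refine ⟨eb (g n), ?_, rfl⟩
    rw [Metric.mem_closedBall, dist_zero_right, eb_norm]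
  obtain ⟨y, -, φ, hφ, hy⟩ := hK.tendsto_subseq hmem
  have hyε : ε ≤ ‖y‖ := by
    refine le_of_tendsto_of_tendsto tendsto_const_nhds hy.norm ?_
    filter_upwards with n
    exact (g (φ n)).2
  set w := ContinuousLinearMap.adjoint Z y with hw
  have hbessel : Summable fun i => ‖⟪eb i, w⟫_ℂ‖ ^ 2 :=
    Orthonormal.inner_products_summable w eb_orthonormal
  have hn0 : Tendsto (fun i : Iq × ℕ => ‖⟪eb i, w⟫_ℂ‖) cofinite (nhds 0) := by
    have := (Real.continuous_sqrt.tendsto 0).comp hbessel.tendsto_cofinite_zero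
    simp only [Real.sqrt_zero] at this
    refine this.congr fun i => ?_
    simp [Real.sqrt_sq_eq_abs, abs_of_nonneg (norm_nonneg _)]
  have hinj : Function.Injective fun n : ℕ => ((g (φ n) : Iq × ℕ)) := by
    intro a b hab
    exact hφ.injective (g.injective (Subtype.val_injective hab))
  have hseq : Tendsto (fun n : ℕ => ‖⟪eb ((g (φ n) : Iq × ℕ)), w⟫_ℂ‖) atTop (nhds 0) := by
    refine hn0.comp ?_
    rw [← Nat.cofinite_eq_atTop]
    exact hinj.tendsto_cofinite
  have heq : ∀ n, ‖⟪eb ((g (φ n) : Iq × ℕ)), w⟫_ℂ‖ = ‖⟪y, u (φ n)⟫_ℂ‖ := by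
    intro n
    rw [hu, ← ContinuousLinearMap.adjoint_inner_left Z (eb ((g (φ n) : Iq × ℕ))) y, ← hw]
    exact norm_inner_symm _ _
  have hlim2 : Tendsto (fun n => ‖⟪y, u (φ n)⟫_ℂ‖) atTop (nhds ‖⟪y, y⟫_ℂ‖) :=
    ((tendsto_const_nhds.inner hy).norm)
  have h0 : ‖⟪y, y⟫_ℂ‖ = 0 := tendsto_nhds_unique hlim2 (hseq.congr heq)
  rw [inner_self_eq_norm_sq_to_K (𝕜 := ℂ), norm_pow, RCLike.norm_ofReal, abs_norm] at h0
  have : ‖y‖ = 0 := by nlinarith [norm_nonneg y]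
  linarith

/-- The basis vector `e_{lk}` of `ℋ²` (zero if `l ∉ (0,1]`). -/
def basisVec (l : ℚ) (k : ℕ) : H2 :=
  if h : 0 < l ∧ l ≤ 1 then lp.single 2 ((⟨l, h⟩ : Iq), k) (1 : ℂ) else 0

/-- Index set for `Bₙ = {e_{lr} : r = 0,…,⌊n/⌊√n⌋⌋-1, l ∈ I_{⌊√n⌋}}`:
pairs `(p, r)` with `1 ≤ p ≤ ⌊√n⌋` and `r < ⌊n/⌊√n⌋⌋`, where `l = p/⌊√n⌋`. -/
def Bfin (n : ℕ) : Finset (ℕ × ℕ) :=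
  (Finset.Icc 1 (Nat.sqrt n)) ×ˢ (Finset.range (n / Nat.sqrt n))

/-- The basis vector of `Bₙ` indexed by `(p, r)`, namely `e_{p/⌊√n⌋, r}`. -/
def bvec (n : ℕ) (pr : ℕ × ℕ) : H2 :=
  basisVec ((pr.1 : ℚ) / (Nat.sqrt n : ℚ)) pr.2

/-- `∑_{e ∈ C} ‖Te‖²` for a subset `C` of the index set of `Bₙ`. -/
def sumSq (T : H2 → H2) (n : ℕ) (C : Finset (ℕ × ℕ)) : ℝ :=
  ∑ pr ∈ C, ‖T (bvec n pr)‖ ^ 2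

/-- The seminorm `Q(T) = inf { limsup_n (1/√n)(∑_{e ∈ Cₙ} ‖Te‖²)^{1/2} }`, the infimum
over all decompositions `Bₙ = Cₙ ⊔ Dₙ` with `#Dₙ = o(n)`, valued in `ℝ≥0∞`. -/
def QQ (T : H2 → H2) : ℝ≥0∞ :=
  ⨅ (C : ℕ → Finset (ℕ × ℕ)) (_ : ∀ n, C n ⊆ Bfin n)
    (_ : Tendsto (fun n => ((Bfin n \ C n).card : ℝ) / n) atTop (nhds 0)),
    Filter.limsup (fun n => ENNReal.ofReal (Real.sqrt (sumSq T n (C n) / n))) atTop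

/-- `T` acts like the operator `T_{jk}`:
`T(e_{lr}) = e^{2πijl} e_{l,r+k}` when `r + k ≥ 0`, and `0` otherwise. -/
def IsTjk (T : H2 → H2) (j k : ℤ) : Prop :=
  ∀ (l : ℚ) (r : ℕ), T (basisVec l r) =
    if 0 ≤ (r : ℤ) + k then
      Complex.exp (2 * Real.pi * Complex.I * (j : ℂ) * (l : ℂ)) • basisVec l ((r : ℤ) + k).toNat
    else 0

def midx (n : ℕ) (pr : ℕ × ℕ) : Iq × ℕ :=
  if h : 0 < ((pr.1 : ℚ) / (Nat.sqrt n : ℚ)) ∧ ((pr.1 : ℚ) / (Nat.sqrt n : ℚ)) ≤ 1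
  then ((⟨_, h⟩ : Iq), pr.2) else ((⟨1, by norm_num⟩ : Iq), pr.2)

lemma midx_cond {n : ℕ} (hn : 1 ≤ n) {pr : ℕ × ℕ} (hpr : pr ∈ Bfin n) :
    0 < ((pr.1 : ℚ) / (Nat.sqrt n : ℚ)) ∧ ((pr.1 : ℚ) / (Nat.sqrt n : ℚ)) ≤ 1 := by
  rw [Bfin, Finset.mem_product, Finset.mem_Icc] at hpr
  have h1 : 1 ≤ pr.1 := hpr.1.1
  have h2 : pr.1 ≤ Nat.sqrt n := hpr.1.2
  have hs : 0 < Nat.sqrt n := le_trans h1 h2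
  constructor
  · apply div_pos
    · exact_mod_cast h1
    · exact_mod_cast hs
  · rw [div_le_one (by exact_mod_cast hs)]
    exact_mod_cast h2

lemma bvec_eq {n : ℕ} (hn : 1 ≤ n) {pr : ℕ × ℕ} (hpr : pr ∈ Bfin n) :
    bvec n pr = eb (midx n pr) := by
  have h := midx_cond hn hpr
  rw [bvec, basisVec, dif_pos h, midx, dif_pos h, eb]

lemma midx_injOn {n : ℕ} (hn : 1 ≤ n) : Set.InjOn (midx n) (Bfin n : Set (ℕ × ℕ)) := by
  intro a ha b hb hab
  have hA := midx_cond hn ha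
  have hB := midx_cond hn hb
  rw [midx, dif_pos hA, midx, dif_pos hB] at hab
  rw [Prod.ext_iff] at hab
  obtain ⟨h1, h2⟩ := hab
  have h1' : ((a.1 : ℚ) / (Nat.sqrt n : ℚ)) = ((b.1 : ℚ) / (Nat.sqrt n : ℚ)) :=
    congrArg Subtype.val h1
  have hs : (0 : ℚ) < (Nat.sqrt n : ℚ) := by
    rcases hA with ⟨hp, -⟩
    by_contra hc
    push_neg at hc
    have : ((a.1 : ℚ) / (Nat.sqrt n : ℚ)) ≤ 0 := div_nonpos_of_nonneg_of_nonpos (by positivity) hc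
    linarith
  have ha1 : a.1 = b.1 := by
    field_simp at h1'
    exact_mod_cast h1'
  exact Prod.ext ha1 h2

lemma Bfin_card_le (n : ℕ) : (Bfin n).card ≤ n := by
  rw [Bfin, Finset.card_product, Nat.card_Icc, Finset.card_range]
  exact Nat.mul_div_le n (Nat.sqrt n)

/-- Every compact operator on `ℋ²` is zero-distributed:
`(1/n) ∑_{e ∈ Bₙ} ‖Ze‖² → 0`. -/
theorem compact_operator_zero_distributed (Z : H2 →L[ℂ] H2) (hZ : IsCompactOperator ⇑Z) :
    Filter.Tendsto (fun n : ℕ => (1 / (n : ℝ)) * sumSq (⇑Z) n (Bfin n)) atTop (nhds 0) := by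
  classical
  have hkey := key_tendsto Z hZ
  rw [Metric.tendsto_atTop]
  intro ε hε
  have hsq : Tendsto (fun i : Iq × ℕ => ‖Z (eb i)‖ ^ 2) cofinite (nhds 0) := by
    have := hkey.mul hkey
    simpa [pow_two] using this
  have hfin : {i : Iq × ℕ | ¬ ‖Z (eb i)‖ ^ 2 < ε / 3}.Finite := by
    have h := Metric.tendsto_nhds.mp hsq (ε / 3) (by linarith)
    rw [Filter.eventually_cofinite] at h
    refine h.subset fun i hi => ?_
    simp only [Set.mem_setOf_eq, Real.dist_eq, sub_zero, not_lt] at hi ⊢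
    rwa [abs_of_nonneg (by positivity)]
  set S := hfin.toFinset with hS
  set Cb := ‖Z‖ ^ 2 with hCb
  have hCb0 : 0 ≤ Cb := by positivity
  have hbd : ∀ i : Iq × ℕ, ‖Z (eb i)‖ ^ 2 ≤ Cb := by
    intro i
    have h := Z.le_opNorm (eb i)
    rw [eb_norm, mul_one] at h
    exact pow_le_pow_left₀ (norm_nonneg _) h 2
  obtain ⟨N, hN⟩ := exists_nat_gt (3 * ((S.card : ℝ) * Cb) / ε)
  refine ⟨max N 1, fun n hn => ?_⟩
  have hn1 : 1 ≤ n := le_trans (le_max_right _ _) hn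
  have hnpos : (0 : ℝ) < n := by exact_mod_cast hn1
  have hnN : (N : ℝ) ≤ n := by exact_mod_cast le_trans (le_max_left _ _) hn
  -- split the sum
  have hsplit := Finset.sum_filter_add_sum_filter_not (Bfin n)
    (fun pr => midx n pr ∈ S) (fun pr => ‖Z (bvec n pr)‖ ^ 2)
  have hb1 : ∑ pr ∈ (Bfin n).filter (fun pr => midx n pr ∈ S), ‖Z (bvec n pr)‖ ^ 2
      ≤ (S.card : ℝ) * Cb := by
    calc ∑ pr ∈ (Bfin n).filter (fun pr => midx n pr ∈ S), ‖Z (bvec n pr)‖ ^ 2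
        ≤ ((Bfin n).filter (fun pr => midx n pr ∈ S)).card • Cb := by
          refine Finset.sum_le_card_nsmul _ _ _ fun pr hpr => ?_
          rw [bvec_eq hn1 (Finset.mem_of_mem_filter _ hpr)]
          exact hbd _
      _ = (((Bfin n).filter (fun pr => midx n pr ∈ S)).card : ℝ) * Cb := by
          rw [nsmul_eq_mul]
      _ ≤ (S.card : ℝ) * Cb := by
          gcongr
          exact_mod_cast Finset.card_le_card_of_injOn (midx n)
            (fun a ha => (Finset.mem_filter.mp ha).2)
            ((midx_injOn hn1).mono (by intro x hx; exact Finset.mem_of_mem_filter _ hx))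
  have hb2 : ∑ pr ∈ (Bfin n).filter (fun pr => ¬ midx n pr ∈ S), ‖Z (bvec n pr)‖ ^ 2
      ≤ (n : ℝ) * (ε / 3) := by
    calc ∑ pr ∈ (Bfin n).filter (fun pr => ¬ midx n pr ∈ S), ‖Z (bvec n pr)‖ ^ 2
        ≤ ((Bfin n).filter (fun pr => ¬ midx n pr ∈ S)).card • (ε / 3) := by
          refine Finset.sum_le_card_nsmul _ _ _ fun pr hpr => ?_
          rw [Finset.mem_filter] at hpr
          obtain ⟨hpr1, hpr2⟩ := hpr
          rw [bvec_eq hn1 hpr1]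
          rw [hS, Set.Finite.mem_toFinset, Set.mem_setOf_eq, not_not] at hpr2
          exact le_of_lt hpr2
      _ = ((((Bfin n).filter (fun pr => ¬ midx n pr ∈ S)).card : ℝ)) * (ε / 3) := by
          rw [nsmul_eq_mul]
      _ ≤ (n : ℝ) * (ε / 3) := by
          have hcard : ((((Bfin n).filter (fun pr => ¬ midx n pr ∈ S)).card : ℝ)) ≤ (n : ℝ) := by
            exact_mod_cast le_trans (Finset.card_filter_le _ _) (Bfin_card_le n)
          exact mul_le_mul_of_nonneg_right hcard (by linarith)
  have hsum_nonneg : 0 ≤ sumSq (⇑Z) n (Bfin n) :=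
    Finset.sum_nonneg fun pr _ => by positivity
  have hsum_le : sumSq (⇑Z) n (Bfin n) ≤ (S.card : ℝ) * Cb + (n : ℝ) * (ε / 3) := by
    rw [sumSq, ← hsplit]
    exact add_le_add hb1 hb2
  rw [Real.dist_eq, sub_zero, abs_of_nonneg (by positivity)]
  have h3 : 3 * ((S.card : ℝ) * Cb) < n * ε := by
    have := lt_of_lt_of_le hN hnN
    rw [div_lt_iff₀ hε] at this
    linarith
  calc (1 / (n : ℝ)) * sumSq (⇑Z) n (Bfin n)
      ≤ (1 / (n : ℝ)) * ((S.card : ℝ) * Cb + (n : ℝ) * (ε / 3)) := by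
        apply mul_le_mul_of_nonneg_left hsum_le (by positivity)
    _ < ε := by
        rw [one_div, inv_mul_lt_iff₀ hnpos]
        nlinarith
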